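/- Let F° be the dual set-valued mapping given by F°(q) = {A^T q + C^T v | v ∈ −𝒴°, B^T q + D^T v = 0} and 𝒱*(Σ^T) the weakly unobservable subspace of the dual system Σ^T = Σ(A^T, C^T, B^T, D^T). Then (F°)^{-1}(𝒱*(Σ^T)) ⊆ 𝒱*(Σ^T). -/

import Mathlib

open Pointwise

/-- `ℓ`-fold iterate of a set-valued map: `SIter F ℓ x = F^ℓ(x)`. -/
def SIter {E : Type*} (F : E → Set E) : ℕ → E → Set E
  | 0, x => {x}
  | n + 1, x => ⋃ y ∈ SIter F n x, F y

/-- `X(F)`: initial states of infinite solutions of `x_{k+1} ∈ F(x_k)`. -/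
def XSet {E : Type*} (F : E → Set E) : Set E :=
  {x | ∃ f : ℕ → E, f 0 = x ∧ ∀ k, f (k + 1) ∈ F (f k)}

/-- `R(F) = ⋃_{ℓ ≥ 1} F^ℓ(0)`. -/
def RSet {E : Type*} [Zero E] (F : E → Set E) : Set E :=
  ⋃ ℓ ∈ {ℓ : ℕ | 1 ≤ ℓ}, SIter F ℓ 0

/-- The set-valued map `F(x) = Ax + B D^{-1}(𝒴 − Cx)` of the constrained system `(Σ,𝒴)`. -/
def Fmap {n m s : ℕ} (A : Matrix (Fin n) (Fin n) ℝ) (B : Matrix (Fin n) (Fin m) ℝ)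
    (C : Matrix (Fin s) (Fin n) ℝ) (D : Matrix (Fin s) (Fin m) ℝ)
    (Y : Set (Fin s → ℝ)) : (Fin n → ℝ) → Set (Fin n → ℝ) :=
  fun x => {z | ∃ u : Fin m → ℝ, C.mulVec x + D.mulVec u ∈ Y ∧ z = A.mulVec x + B.mulVec u}

/-- The strongly reachable subspace `𝒯*(Σ)`: states reachable from `0` with the output
kept identically zero along the way. -/
def Tstar {n m s : ℕ} (A : Matrix (Fin n) (Fin n) ℝ) (B : Matrix (Fin n) (Fin m) ℝ)
    (C : Matrix (Fin s) (Fin n) ℝ) (D : Matrix (Fin s) (Fin m) ℝ) : Set (Fin n → ℝ) :=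
  RSet (Fmap A B C D ({0} : Set (Fin s → ℝ)))

/-- The weakly unobservable subspace `𝒱*(Σ)`: initial states for which an input exists
making the output identically zero. -/
def Vstar {n m s : ℕ} (A : Matrix (Fin n) (Fin n) ℝ) (B : Matrix (Fin n) (Fin m) ℝ)
    (C : Matrix (Fin s) (Fin n) ℝ) (D : Matrix (Fin s) (Fin m) ℝ) : Set (Fin n → ℝ) :=
  XSet (Fmap A B C D ({0} : Set (Fin s → ℝ)))

/-- `𝒦(Σ) = im D + C 𝒯*(Σ)`. -/
def Kset {n m s : ℕ} (A : Matrix (Fin n) (Fin n) ℝ) (B : Matrix (Fin n) (Fin m) ℝ)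
    (C : Matrix (Fin s) (Fin n) ℝ) (D : Matrix (Fin s) (Fin m) ℝ) : Set (Fin s → ℝ) :=
  {y | ∃ (u : Fin m → ℝ) (t : Fin n → ℝ), t ∈ Tstar A B C D ∧ y = D.mulVec u + C.mulVec t}

/-- The image `im [C D]`. -/
def CDrange {n m s : ℕ} (C : Matrix (Fin s) (Fin n) ℝ) (D : Matrix (Fin s) (Fin m) ℝ) :
    Set (Fin s → ℝ) :=
  Set.range (fun p : (Fin n → ℝ) × (Fin m → ℝ) => C.mulVec p.1 + D.mulVec p.2)

/-- The polar set `𝒴° = {q | ⟨q,y⟩ ≤ 1 for all y ∈ 𝒴}` (with the standard dot product). -/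
def Ypolar {s : ℕ} (Y : Set (Fin s → ℝ)) : Set (Fin s → ℝ) :=
  {q | ∀ y ∈ Y, dotProduct q y ≤ 1}

/-- The dual set-valued map `F°(q) = {Aᵀq + Cᵀv | v ∈ −𝒴°, Bᵀq + Dᵀv = 0}`. -/
def Fpolar {n m s : ℕ} (A : Matrix (Fin n) (Fin n) ℝ) (B : Matrix (Fin n) (Fin m) ℝ)
    (C : Matrix (Fin s) (Fin n) ℝ) (D : Matrix (Fin s) (Fin m) ℝ)
    (Y : Set (Fin s → ℝ)) : (Fin n → ℝ) → Set (Fin n → ℝ) :=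
  fun q => {w | ∃ v : Fin s → ℝ, v ∈ -Ypolar Y ∧
    B.transpose.mulVec q + D.transpose.mulVec v = 0 ∧
    w = A.transpose.mulVec q + C.transpose.mulVec v}

/-- `(F°)^{-1}(𝒱*(Σᵀ)) ⊆ 𝒱*(Σᵀ)`. -/
theorem stmt15 {n m s : ℕ} (A : Matrix (Fin n) (Fin n) ℝ) (B : Matrix (Fin n) (Fin m) ℝ)
    (C : Matrix (Fin s) (Fin n) ℝ) (D : Matrix (Fin s) (Fin m) ℝ)
    (Y : Set (Fin s → ℝ)) (hY : Convex ℝ Y) (h0Y : (0 : Fin s → ℝ) ∈ Y) :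
    {q : Fin n → ℝ |
        (Fpolar A B C D Y q ∩ Vstar A.transpose C.transpose B.transpose D.transpose).Nonempty}
      ⊆ Vstar A.transpose C.transpose B.transpose D.transpose := by
  rintro q ⟨w, ⟨v, hv, hBD, hw⟩, f, hf0, hf⟩
  refine ⟨fun k => Nat.rec q (fun k _ => f k) k, rfl, ?_⟩
  intro k
  cases k with
  | zero =>
    refine ⟨v, ?_, ?_⟩
    · simpa using hBD
    · simpa [hf0] using hw
  | succ k => exact hf k
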